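/- Let Φ, Ψ : Ω → ℂ be maps differentiable at a point z₀ ∈ Ω (in the real sense), and suppose Im((Φ(z) − Φ(z₀))/(Ψ(z) − Ψ(z₀))) ≤ 0 for all z ∈ Ω \ {z₀}, with Ψ injective. If moreover Ψ is quasiconformal at z₀ in the sense that |Ψ_z̄(z₀)| < |Ψ_z(z₀)| (so the first-order Taylor term of Ψ is invertible), then Im(Φ_z(z₀) · conj(Ψ_z(z₀))) ≤ 0. -/

import Mathlib

open Complex Real Filter Topology ComplexConjugate

private lemma exists_unit' (u : ℂ) :
    ∃ h : ℂ, ‖h‖ = 1 ∧ u * h ^ 2 = (‖u‖ : ℂ) * I := by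
  use Complex.exp ((((π / 2 - u.arg) / 2 : ℝ) : ℂ) * I)
  refine ⟨Complex.norm_exp_ofReal_mul_I _, ?_⟩
  have h2 : Complex.exp ((((π / 2 - u.arg) / 2 : ℝ) : ℂ) * I) ^ 2
      = Complex.exp (((π / 2 - u.arg : ℝ) : ℂ) * I) := by
    rw [sq, ← Complex.exp_add]
    congr 1
    push_cast
    ring
  have hexpI : Complex.exp (((π / 2 : ℝ) : ℂ) * I) = I := by
    rw [Complex.exp_mul_I, ← Complex.ofReal_cos, ← Complex.ofReal_sin,
      Real.cos_pi_div_two, Real.sin_pi_div_two]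
    simp
  rw [h2]
  nth_rewrite 1 [← Complex.norm_mul_exp_arg_mul_I u]
  rw [mul_assoc, ← Complex.exp_add,
    show ((u.arg : ℂ) * I + ((π / 2 - u.arg : ℝ) : ℂ) * I) = ((π / 2 : ℝ) : ℂ) * I by
      push_cast; ring,
    hexpI]

private lemma im_mul_conj_nonpos' {X W : ℂ} (hW : W ≠ 0) (h : (X / W).im ≤ 0) :
    (X * conj W).im ≤ 0 := by
  have e : X * conj W = (X / W) * ((Complex.normSq W : ℝ) : ℂ) := by
    rw [← Complex.mul_conj, div_mul_eq_mul_div,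
      show X * (W * conj W) = W * (X * conj W) by ring, mul_div_cancel_left₀ _ hW]
  rw [e, Complex.mul_im]
  simp only [Complex.ofReal_re, Complex.ofReal_im, mul_zero, zero_add, add_zero]
  exact mul_nonpos_of_nonpos_of_nonneg h (Complex.normSq_nonneg _)

private lemma clm_apply_eq (A : ℂ →L[ℝ] ℂ) :
    ∀ h : ℂ, A h = (A 1 - I * A I) / 2 * h + (A 1 + I * A I) / 2 * conj h := by
  intro h
  have hre : h = (h.re : ℂ) + (h.im : ℂ) * I := (Complex.re_add_im h).symm
  have hc : conj h = (h.re : ℂ) - (h.im : ℂ) * I := by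
    apply Complex.ext <;> simp
  have hA : A h = (h.re : ℂ) * A 1 + (h.im : ℂ) * A I := by
    conv_lhs => rw [hre]
    rw [show ((h.re : ℂ) + (h.im : ℂ) * I) = h.re • (1:ℂ) + h.im • I by
      simp [Complex.real_smul], map_add, map_smul, map_smul, Complex.real_smul,
      Complex.real_smul]
  rw [hA]
  linear_combination ((h.im : ℂ) * A I) * Complex.I_sq
    - ((A 1 - I * A I) / 2) * hre - ((A 1 + I * A I) / 2) * hc

private lemma alg_main' (a a' b b' : ℂ)
    (hqc : ‖b'‖ < ‖b‖)
    (key : ∀ h : ℂ, h ≠ 0 → ((a * h + a' * conj h) * conj (b * h + b' * conj h)).im ≤ 0) :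
    (a * conj b).im ≤ 0 := by
  -- inequality 1
  obtain ⟨h₁, h₁abs, h₁val⟩ := exists_unit' (a * conj b' - conj a' * b)
  have h₁ne : h₁ ≠ 0 := by
    intro e; rw [e] at h₁abs; simp at h₁abs
  have r1 : h₁ * conj h₁ = 1 := by
    rw [Complex.mul_conj]
    norm_cast
    rw [← Complex.sq_norm, h₁abs]; norm_num
  have hadd : conj a' * b * h₁ ^ 2 + a' * conj b * (conj h₁) ^ 2
      = (((2 * (conj a' * b * h₁ ^ 2).re : ℝ)) : ℂ) := by
    rw [show a' * conj b * (conj h₁) ^ 2 = conj (conj a' * b * h₁ ^ 2) by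
      simp only [map_mul, map_pow, Complex.conj_conj], Complex.add_conj]
  have eX : (a * h₁ + a' * conj h₁) * conj (b * h₁ + b' * conj h₁)
      = a * conj b + a' * conj b' + ((‖a * conj b' - conj a' * b‖ : ℝ) : ℂ) * I
        + (((2 * (conj a' * b * h₁ ^ 2).re : ℝ)) : ℂ) := by
    simp only [map_add, map_mul, map_pow, Complex.conj_conj]
    linear_combination (a * conj b + a' * conj b') * r1 + h₁val + hadd
  have i1 : (a * conj b).im + (a' * conj b').im
      + ‖a * conj b' - conj a' * b‖ ≤ 0 := by
    have := key h₁ h₁ne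
    rw [eX] at this
    simpa [Complex.add_im, Complex.mul_im, Complex.conj_im, Complex.conj_re] using this
  -- inequality 2
  obtain ⟨k, kabs, kval⟩ := exists_unit' (a' * b - a * b')
  have kne : k ≠ 0 := by
    intro e; rw [e] at kabs; simp at kabs
  have rk : k * conj k = 1 := by
    rw [Complex.mul_conj]
    norm_cast
    rw [← Complex.sq_norm, kabs]; norm_num
  set D : ℝ := Complex.normSq b - Complex.normSq b' with hD
  have hDpos : 0 < D := by
    rw [hD]
    have : ‖b'‖ ^ 2 < ‖b‖ ^ 2 := by
      have h0 : 0 ≤ ‖b'‖ := norm_nonneg _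
      nlinarith
    rw [← Complex.sq_norm, ← Complex.sq_norm]; linarith
  set h₂ : ℂ := conj b * conj k - b' * k with hh₂
  have h₂c : conj h₂ = b * k - conj b' * conj k := by
    rw [hh₂]; simp only [map_sub, map_mul, Complex.conj_conj]
  have eb : b * h₂ + b' * conj h₂ = (D : ℂ) * conj k := by
    rw [hh₂, h₂c]
    have hb : b * conj b = (Complex.normSq b : ℂ) := Complex.mul_conj b
    have hb' : b' * conj b' = (Complex.normSq b' : ℂ) := Complex.mul_conj b'
    rw [hD]
    push_cast
    linear_combination (conj k) * hb - (conj k) * hb'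
  have ea : a * h₂ + a' * conj h₂
      = (a * conj b - a' * conj b') * conj k + (a' * b - a * b') * k := by
    rw [hh₂, h₂c]; ring
  have h₂ne : h₂ ≠ 0 := by
    intro e
    have : b * h₂ + b' * conj h₂ = 0 := by rw [e]; simp
    rw [eb] at this
    have hk : conj k ≠ 0 := by simpa using kne
    have hDz : (D : ℂ) ≠ 0 := by
      simpa using ne_of_gt hDpos
    exact (mul_ne_zero hDz hk) this
  have eX₂ : (a * h₂ + a' * conj h₂) * conj (b * h₂ + b' * conj h₂)
      = (D : ℂ) * (a * conj b - a' * conj b'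
          + ((‖a' * b - a * b'‖ : ℝ) : ℂ) * I) := by
    rw [ea, eb]
    rw [show conj ((D : ℂ) * conj k) = (D : ℂ) * k by
      simp only [map_mul, Complex.conj_conj, Complex.conj_ofReal]]
    linear_combination ((D : ℂ) * (a * conj b - a' * conj b')) * rk + (D : ℂ) * kval
  have i2 : (a * conj b).im - (a' * conj b').im + ‖a' * b - a * b'‖ ≤ 0 := by
    have := key h₂ h₂ne
    rw [eX₂] at this
    have him : ((D : ℂ) * (a * conj b - a' * conj b'
        + ((‖a' * b - a * b'‖ : ℝ) : ℂ) * I)).im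
        = D * ((a * conj b).im - (a' * conj b').im + ‖a' * b - a * b'‖) := by
      simp [Complex.mul_im, Complex.add_im, Complex.sub_im]
    rw [him] at this
    nlinarith
  have habs1 : 0 ≤ ‖a * conj b' - conj a' * b‖ := norm_nonneg _
  have habs2 : 0 ≤ ‖a' * b - a * b'‖ := norm_nonneg _
  linarith

/-- If `Φ, Ψ` are (real-)differentiable at `z₀ ∈ Ω` with derivatives `A, B`,
`Im((Φ z − Φ z₀)/(Ψ z − Ψ z₀)) ≤ 0` for all `z ∈ Ω \ {z₀}`, `Ψ` is injective on `Ω`,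
and `|Ψ_z̄(z₀)| < |Ψ_z(z₀)|`, then `Im(Φ_z(z₀) conj(Ψ_z(z₀))) ≤ 0`.
Here `Φ_z = (Φ_x − iΦ_y)/2 = (A 1 − i·A i)/2` and `Φ_z̄ = (A 1 + i·A i)/2`, etc. -/
theorem stmt10 (Ω : Set ℂ) (hΩo : IsOpen Ω) (z₀ : ℂ) (hz₀ : z₀ ∈ Ω)
    (Φ Ψ : ℂ → ℂ) (A B : ℂ →L[ℝ] ℂ)
    (hΦ : HasFDerivAt Φ A z₀) (hΨ : HasFDerivAt Ψ B z₀)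
    (hΨinj : Set.InjOn Ψ Ω)
    (hqc : ‖(B 1 + I * B I) / 2‖ < ‖(B 1 - I * B I) / 2‖)
    (hneg : ∀ z ∈ Ω, z ≠ z₀ → ((Φ z - Φ z₀) / (Ψ z - Ψ z₀)).im ≤ 0) :
    (((A 1 - I * A I) / 2) * (starRingEnd ℂ) ((B 1 - I * B I) / 2)).im ≤ 0 := by
  have key0 : ∀ h : ℂ, h ≠ 0 → (A h * conj (B h)).im ≤ 0 := by
    intro h hh
    have lΦ : Tendsto (slope (fun t : ℝ => Φ (z₀ + t • h)) 0) (𝓝[≠] 0) (𝓝 (A h)) :=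
      hasDerivAt_iff_tendsto_slope.mp (hΦ.hasLineDerivAt h)
    have lΨ : Tendsto (slope (fun t : ℝ => Ψ (z₀ + t • h)) 0) (𝓝[≠] 0) (𝓝 (B h)) :=
      hasDerivAt_iff_tendsto_slope.mp (hΨ.hasLineDerivAt h)
    have lmul : Tendsto (fun t : ℝ =>
        (slope (fun t : ℝ => Φ (z₀ + t • h)) 0 t *
          conj (slope (fun t : ℝ => Ψ (z₀ + t • h)) 0 t)).im)
        (𝓝[≠] 0) (𝓝 ((A h * conj (B h)).im)) :=
      (Complex.continuous_im.tendsto _).comp (lΦ.mul ((Complex.continuous_conj.tendsto _).comp lΨ))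
    have hsub : 𝓝[>] (0:ℝ) ≤ 𝓝[≠] (0:ℝ) := nhdsWithin_mono 0 (fun x hx => ne_of_gt hx)
    refine le_of_tendsto (lmul.mono_left hsub) ?_
    have hmem : ∀ᶠ t : ℝ in 𝓝 0, z₀ + t • h ∈ Ω := by
      have hc : Tendsto (fun t : ℝ => z₀ + t • h) (𝓝 0) (𝓝 z₀) := by
        have hcont : Continuous fun t : ℝ => z₀ + t • h := by fun_prop
        simpa using hcont.tendsto 0
      exact hc.eventually_mem (hΩo.mem_nhds hz₀)
    filter_upwards [eventually_nhdsWithin_of_eventually_nhds hmem, self_mem_nhdsWithin]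
      with t htΩ ht
    have ht0 : (0:ℝ) < t := ht
    have hz : z₀ + t • h ≠ z₀ := by
      simpa using smul_ne_zero (ne_of_gt ht0) hh
    have hΨne : Ψ (z₀ + t • h) - Ψ z₀ ≠ 0 :=
      sub_ne_zero.mpr (fun e => hz (hΨinj htΩ hz₀ e))
    have h1 : ((Φ (z₀ + t • h) - Φ z₀) / (Ψ (z₀ + t • h) - Ψ z₀)).im ≤ 0 := hneg _ htΩ hz
    have h2 : ((Φ (z₀ + t • h) - Φ z₀) * conj (Ψ (z₀ + t • h) - Ψ z₀)).im ≤ 0 :=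
      im_mul_conj_nonpos' hΨne h1
    have e2 : slope (fun t : ℝ => Φ (z₀ + t • h)) 0 t *
        conj (slope (fun t : ℝ => Ψ (z₀ + t • h)) 0 t)
        = ((t⁻¹ * t⁻¹ : ℝ) : ℂ) * ((Φ (z₀ + t • h) - Φ z₀) * conj (Ψ (z₀ + t • h) - Ψ z₀)) := by
      simp only [slope, vsub_eq_sub, sub_zero, Complex.real_smul, map_mul, map_sub,
        Complex.conj_ofReal, zero_smul, zero_add]
      push_cast
      ring_nf
    rw [e2, Complex.mul_im]
    simp only [Complex.ofReal_re, Complex.ofReal_im, zero_mul, add_zero]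
    exact mul_nonpos_of_nonneg_of_nonpos (by positivity) h2
  exact alg_main' ((A 1 - I * A I) / 2) ((A 1 + I * A I) / 2)
    ((B 1 - I * B I) / 2) ((B 1 + I * B I) / 2) hqc
    (fun h hh => by
      rw [← clm_apply_eq A h, ← clm_apply_eq B h]
      exact key0 h hh)
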